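/- Let Z be a standard Gaussian random variable and ε ~ Uniform[−1/2,1/2] independent of Z. Then the Fisher information J(ε + √s·Z) (of the density of ε + √s·Z with respect to location) is strictly decreasing in s > 0. -/

import Mathlib

open MeasureTheory ProbabilityTheory

/-- The density of `ε + √s·Z` where `Z` is standard Gaussian and `ε ~ Uniform[−1/2,1/2]` is
independent of `Z`: the convolution of the `N(0, s)` density with the uniform density. -/
noncomputable def ditherGaussDensity (s : ℝ) (x : ℝ) : ℝ :=
  ∫ u in Set.Icc (-(1 / 2) : ℝ) (1 / 2), gaussianPDFReal 0 (Real.toNNReal s) (x - u)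

/-- The (location) Fisher information of the density of `ε + √s·Z`. -/
noncomputable def ditherGaussFisherInfo (s : ℝ) : ℝ :=
  ∫ x : ℝ, (deriv (ditherGaussDensity s) x) ^ 2 / ditherGaussDensity s x

open Real

noncomputable def gf (a x : ℝ) : ℝ := (Real.sqrt (2 * π * a))⁻¹ * Real.exp (-x ^ 2 / (2 * a))

lemma gf_eq_gaussianPDFReal {a : ℝ} (ha : 0 ≤ a) (x : ℝ) :
    gaussianPDFReal 0 a.toNNReal x = gf a x := by
  rw [gaussianPDFReal_def, gf]
  simp [Real.coe_toNNReal a ha]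

lemma gf_pos {a : ℝ} (ha : 0 < a) (x : ℝ) : 0 < gf a x := by
  have h2 : (0:ℝ) < 2 * π * a := by positivity
  have h3 := Real.sqrt_pos.2 h2
  unfold gf
  positivity

lemma gf_continuous (a : ℝ) : Continuous (gf a) := by
  unfold gf; fun_prop

lemma gf_integral {a : ℝ} (ha : 0 < a) : ∫ x, gf a x = 1 := by
  rw [← funext (gf_eq_gaussianPDFReal ha.le)]
  exact integral_gaussianPDFReal_eq_one 0 (by simp [Real.toNNReal_pos.2 ha, ne_of_gt])

lemma gf_shift_integral {a : ℝ} (ha : 0 < a) (m : ℝ) : ∫ y, gf a (y - m) = 1 := by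
  rw [integral_sub_right_eq_self (gf a) m]; exact gf_integral ha

/-- Gaussian convolution factorization. -/
lemma gf_mul_gf {a b : ℝ} (ha : 0 < a) (hb : 0 < b) (z y : ℝ) :
    gf a (z - y) * gf b y = gf (a + b) z * gf (a * b / (a + b)) (y - b * z / (a + b)) := by
  have hab : 0 < a + b := by linarith
  unfold gf
  have key : (Real.sqrt (2*π*a))⁻¹ * (Real.sqrt (2*π*b))⁻¹
      = (Real.sqrt (2*π*(a+b)))⁻¹ * (Real.sqrt (2*π*(a*b/(a+b))))⁻¹ := by
    rw [← mul_inv, ← mul_inv, ← Real.sqrt_mul (by positivity), ← Real.sqrt_mul (by positivity)]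
    congr 2
    field_simp
  have keyE : Real.exp (-(z - y) ^ 2 / (2 * a)) * Real.exp (-y ^ 2 / (2 * b))
      = Real.exp (-z ^ 2 / (2 * (a + b))) *
        Real.exp (-(y - b * z / (a + b)) ^ 2 / (2 * (a * b / (a + b)))) := by
    rw [← Real.exp_add, ← Real.exp_add]
    congr 1
    field_simp
    ring
  calc (Real.sqrt (2*π*a))⁻¹ * Real.exp (-(z - y) ^ 2 / (2 * a)) *
        ((Real.sqrt (2*π*b))⁻¹ * Real.exp (-y ^ 2 / (2 * b)))
      = ((Real.sqrt (2*π*a))⁻¹ * (Real.sqrt (2*π*b))⁻¹) *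
        (Real.exp (-(z - y) ^ 2 / (2 * a)) * Real.exp (-y ^ 2 / (2 * b))) := by ring
    _ = _ := by rw [key, keyE]; ring

lemma gf_conv {a b : ℝ} (ha : 0 < a) (hb : 0 < b) (z : ℝ) :
    ∫ y, gf a (z - y) * gf b y = gf (a + b) z := by
  have hab : 0 < a * b / (a + b) := by positivity
  calc ∫ y, gf a (z - y) * gf b y
      = ∫ y, gf (a + b) z * gf (a * b / (a + b)) (y - b * z / (a + b)) := by
        simp_rw [gf_mul_gf ha hb]
    _ = gf (a + b) z * ∫ y, gf (a * b / (a + b)) (y - b * z / (a + b)) := integral_const_mul _ _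
    _ = gf (a + b) z := by rw [gf_shift_integral hab]; ring






lemma dgd_eq_interval {s : ℝ} (hs : 0 < s) (x : ℝ) :
    ditherGaussDensity s x = ∫ w in (x - 1/2)..(x + 1/2), gf s w := by
  rw [ditherGaussDensity]
  simp_rw [gf_eq_gaussianPDFReal hs.le]
  rw [MeasureTheory.integral_Icc_eq_integral_Ioc,
    ← intervalIntegral.integral_of_le (by norm_num : (-(1/2):ℝ) ≤ 1/2),
    intervalIntegral.integral_comp_sub_left (gf s) x]
  norm_num

lemma dgd_hasDerivAt {s : ℝ} (hs : 0 < s) (x : ℝ) :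
    HasDerivAt (ditherGaussDensity s) (gf s (x + 1/2) - gf s (x - 1/2)) x := by
  have hc := gf_continuous s
  have hfun : ditherGaussDensity s = fun x =>
      (∫ w in (0:ℝ)..(x + 1/2), gf s w) - ∫ w in (0:ℝ)..(x - 1/2), gf s w := by
    funext y
    rw [dgd_eq_interval hs,
      ← intervalIntegral.integral_interval_sub_left (hc.intervalIntegrable 0 (y + 1/2))
        (hc.intervalIntegrable 0 (y - 1/2))]
  rw [hfun]
  have h1 : HasDerivAt (fun u : ℝ => ∫ w in (0:ℝ)..(u + 1/2), gf s w) (gf s (x + 1/2)) x := by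
    have := ((hc.integral_hasStrictDerivAt 0 (x + 1/2)).hasDerivAt).comp x
      ((hasDerivAt_id x).add_const (1/2))
    simpa [Function.comp_def] using this
  have h2 : HasDerivAt (fun u : ℝ => ∫ w in (0:ℝ)..(u - 1/2), gf s w) (gf s (x - 1/2)) x := by
    have := ((hc.integral_hasStrictDerivAt 0 (x - 1/2)).hasDerivAt).comp x
      ((hasDerivAt_id x).sub_const (1/2))
    simpa [Function.comp_def] using this
  exact h1.sub h2

lemma gf_mono {a : ℝ} (ha : 0 < a) {x y : ℝ} (h : |x| ≤ |y|) : gf a y ≤ gf a x := by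
  unfold gf
  have : (0:ℝ) < (Real.sqrt (2 * π * a))⁻¹ := by
    have : (0:ℝ) < 2 * π * a := by positivity
    simp [Real.sqrt_pos.2 this]
  apply mul_le_mul_of_nonneg_left _ this.le
  apply Real.exp_le_exp.2
  have hx2 : x ^ 2 ≤ y ^ 2 := by
    rw [← sq_abs x, ← sq_abs y]
    exact pow_le_pow_left₀ (abs_nonneg x) h 2
  have h2a : (0:ℝ) < 2 * a := by linarith
  exact div_le_div_of_nonneg_right (neg_le_neg hx2) h2a.le

lemma dgd_lower {s : ℝ} (hs : 0 < s) (x : ℝ) :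
    gf s (|x| + 1/2) ≤ ditherGaussDensity s x := by
  rw [dgd_eq_interval hs]
  have hle : (x - 1/2 : ℝ) ≤ x + 1/2 := by linarith
  calc gf s (|x| + 1/2) = ∫ _ in (x - 1/2)..(x + 1/2), gf s (|x| + 1/2) := by
        simp
        ring
    _ ≤ ∫ w in (x - 1/2)..(x + 1/2), gf s w := by
        apply intervalIntegral.integral_mono_on hle (by simp) ((gf_continuous s).intervalIntegrable _ _)
        intro w hw
        apply gf_mono hs
        rw [abs_of_nonneg (by positivity : (0:ℝ) ≤ |x| + 1/2)]
        rcases abs_cases w with ⟨hw1, _⟩ | ⟨hw1, _⟩ <;> rcases abs_cases x with ⟨hx1, _⟩ | ⟨hx1, _⟩ <;>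
          simp only [Set.mem_Icc] at hw <;> linarith [hw.1, hw.2]

lemma dgd_pos {s : ℝ} (hs : 0 < s) (x : ℝ) : 0 < ditherGaussDensity s x :=
  lt_of_lt_of_le (gf_pos hs _) (dgd_lower hs x)

noncomputable def hK (s : ℝ) : ℝ := 4 * (Real.sqrt (2 * π * s))⁻¹ * Real.exp (9 / (4 * s))

lemma hK_pos {s : ℝ} (hs : 0 < s) : 0 < hK s := by
  have : (0:ℝ) < 2 * π * s := by positivity
  have := Real.sqrt_pos.2 this
  unfold hK; positivity

lemma h_le {s : ℝ} (hs : 0 < s) (x : ℝ) :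
    (gf s (x + 1/2) - gf s (x - 1/2)) ^ 2 / ditherGaussDensity s x
      ≤ hK s * Real.exp (-x ^ 2 / (4 * s)) := by
  have hgpos := gf_pos hs (|x| + 1/2)
  have step1 : (gf s (x + 1/2) - gf s (x - 1/2)) ^ 2 / ditherGaussDensity s x
      ≤ (gf s (x + 1/2) - gf s (x - 1/2)) ^ 2 / gf s (|x| + 1/2) :=
    div_le_div_of_nonneg_left (sq_nonneg _) hgpos (dgd_lower hs x)
  refine step1.trans ?_
  rw [div_le_iff₀ hgpos]
  set c : ℝ := (Real.sqrt (2 * π * s))⁻¹ with hc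
  have hcpos : 0 < c := by
    have : (0:ℝ) < 2 * π * s := by positivity
    have := Real.sqrt_pos.2 this
    positivity
  have expand : ∀ w : ℝ, gf s w = c * Real.exp (-w ^ 2 / (2 * s)) := fun w => rfl
  have keyexp : ∀ m : ℝ, m ^ 2 = (|x| - 1/2)^2 →
      Real.exp (-m ^ 2 / (2*s)) ^ 2 ≤
        Real.exp (9 / (4*s)) * Real.exp (-x ^ 2 / (4*s)) * Real.exp (-(|x| + 1/2) ^ 2 / (2*s)) := by
    intro m hm
    rw [← Real.exp_add, ← Real.exp_add, ← Real.exp_nat_mul]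
    apply Real.exp_le_exp.2
    have habs : |x| ^ 2 = x ^ 2 := sq_abs x
    have h1 : (9 / (4*s) + -x ^ 2 / (4*s) + -(|x| + 1/2) ^ 2 / (2*s)) - (2:ℕ) * (-m ^ 2 / (2*s))
        = (x^2 - 6*|x| + 19/2) / (4*s) := by
      rw [hm, ← sq_abs x]
      field_simp
      ring_nf
    have h2 : (0:ℝ) ≤ (x^2 - 6*|x| + 19/2) / (4*s) := by
      apply div_nonneg _ (by positivity)
      nlinarith [sq_nonneg (|x| - 3), sq_abs x]
    linarith
  -- |D| ≤ 2 * c * exp(-(|x|-1/2)^2/(2s))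
  have hDabs : (gf s (x + 1/2) - gf s (x - 1/2)) ^ 2
      ≤ (2 * c * Real.exp (-(|x| - 1/2) ^ 2 / (2*s))) ^ 2 := by
    have e1 : Real.exp (-(x + 1/2) ^ 2 / (2*s)) ≤ Real.exp (-(|x| - 1/2) ^ 2 / (2*s)) := by
      apply Real.exp_le_exp.2
      apply div_le_div_of_nonneg_right _ (by positivity : (0:ℝ) ≤ 2 * s)
      have : (|x| - 1/2)^2 ≤ (x + 1/2)^2 := by
        rcases abs_cases x with ⟨h, _⟩ | ⟨h, _⟩ <;> nlinarith [abs_nonneg x]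
      linarith
    have e2 : Real.exp (-(x - 1/2) ^ 2 / (2*s)) ≤ Real.exp (-(|x| - 1/2) ^ 2 / (2*s)) := by
      apply Real.exp_le_exp.2
      apply div_le_div_of_nonneg_right _ (by positivity : (0:ℝ) ≤ 2 * s)
      have : (|x| - 1/2)^2 ≤ (x - 1/2)^2 := by
        rcases abs_cases x with ⟨h, _⟩ | ⟨h, _⟩ <;> nlinarith [abs_nonneg x]
      linarith
    have hpos1 : 0 < Real.exp (-(x + 1/2) ^ 2 / (2*s)) := Real.exp_pos _
    have hpos2 : 0 < Real.exp (-(x - 1/2) ^ 2 / (2*s)) := Real.exp_pos _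
    rw [expand, expand]
    apply sq_le_sq'
    · nlinarith
    · nlinarith
  refine hDabs.trans ?_
  have := keyexp (|x| - 1/2) rfl
  calc (2 * c * Real.exp (-(|x| - 1/2) ^ 2 / (2*s))) ^ 2
      = 4 * c^2 * Real.exp (-(|x| - 1/2) ^ 2 / (2*s)) ^ 2 := by ring
    _ ≤ 4 * c^2 * (Real.exp (9 / (4*s)) * Real.exp (-x ^ 2 / (4*s))
          * Real.exp (-(|x| + 1/2) ^ 2 / (2*s))) := by
        apply mul_le_mul_of_nonneg_left this (by positivity)
    _ = hK s * Real.exp (-x ^ 2 / (4 * s)) * gf s (|x| + 1/2) := by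
        rw [hK, expand]
        ring


noncomputable def dD (s x : ℝ) : ℝ := gf s (x + 1/2) - gf s (x - 1/2)

noncomputable def hFun (s x : ℝ) : ℝ := dD s x ^ 2 / ditherGaussDensity s x

lemma dgd_continuous {s : ℝ} (hs : 0 < s) : Continuous (ditherGaussDensity s) :=
  continuous_iff_continuousAt.2 fun x => (dgd_hasDerivAt hs x).differentiableAt.continuousAt

lemma dD_continuous (s : ℝ) : Continuous (dD s) := by
  unfold dD
  exact ((gf_continuous s).comp (by continuity)).sub ((gf_continuous s).comp (by continuity))

lemma hFun_continuous {s : ℝ} (hs : 0 < s) : Continuous (hFun s) := by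
  unfold hFun
  exact ((dD_continuous s).pow 2).div (dgd_continuous hs) fun x => (dgd_pos hs x).ne'

lemma hFun_nonneg {s : ℝ} (hs : 0 < s) (x : ℝ) : 0 ≤ hFun s x :=
  div_nonneg (sq_nonneg _) (dgd_pos hs x).le

lemma hFun_le {s : ℝ} (hs : 0 < s) (x : ℝ) : hFun s x ≤ hK s * Real.exp (-x ^ 2 / (4 * s)) :=
  h_le hs x

lemma hFun_bdd {s : ℝ} (hs : 0 < s) (x : ℝ) : hFun s x ≤ hK s := by
  refine (hFun_le hs x).trans ?_
  have h1 : Real.exp (-x ^ 2 / (4 * s)) ≤ 1 := by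
    rw [Real.exp_le_one_iff]
    exact div_nonpos_of_nonpos_of_nonneg (neg_nonpos.2 (sq_nonneg x)) (by positivity)
  nlinarith [hK_pos hs]

lemma hFun_integrable {s : ℝ} (hs : 0 < s) : Integrable (hFun s) := by
  have hg : Integrable (fun x : ℝ => hK s * Real.exp (-(1/(4*s)) * x ^ 2)) :=
    (integrable_exp_neg_mul_sq (by positivity : (0:ℝ) < 1/(4*s))).const_mul _
  apply hg.mono' (hFun_continuous hs).aestronglyMeasurable
  filter_upwards with x
  rw [Real.norm_of_nonneg (hFun_nonneg hs x)]
  have : -(1/(4*s)) * x ^ 2 = -x ^ 2 / (4 * s) := by ring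
  rw [this]
  exact hFun_le hs x

lemma deriv_dgd {s : ℝ} (hs : 0 < s) (x : ℝ) : deriv (ditherGaussDensity s) x = dD s x :=
  (dgd_hasDerivAt hs x).deriv

lemma fisher_eq {s : ℝ} (hs : 0 < s) : ditherGaussFisherInfo s = ∫ x, hFun s x := by
  unfold ditherGaussFisherInfo hFun
  congr 1
  funext x
  rw [deriv_dgd hs]

lemma gf_integrable {a : ℝ} (ha : 0 < a) : Integrable (gf a) := by
  have := integrable_gaussianPDFReal 0 a.toNNReal
  rwa [funext (gf_eq_gaussianPDFReal ha.le)] at this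

lemma gf_le_c {a : ℝ} (ha : 0 < a) (w : ℝ) : gf a w ≤ (Real.sqrt (2 * π * a))⁻¹ := by
  unfold gf
  have hc : (0:ℝ) < (Real.sqrt (2 * π * a))⁻¹ := by
    have : (0:ℝ) < 2 * π * a := by positivity
    have := Real.sqrt_pos.2 this
    positivity
  nlinarith [Real.exp_le_one_iff.2
    (div_nonpos_of_nonpos_of_nonneg (neg_nonpos.2 (sq_nonneg w)) (by positivity : (0:ℝ) ≤ 2*a))]

lemma gf_mul_integrable {a b : ℝ} (ha : 0 < a) (hb : 0 < b) (z : ℝ) :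
    Integrable (fun y => gf a (z - y) * gf b y) := by
  apply ((gf_integrable hb).const_mul ((Real.sqrt (2 * π * a))⁻¹)).mono'
  · exact (((gf_continuous a).comp (by continuity)).mul (gf_continuous b)).aestronglyMeasurable
  · filter_upwards with y
    rw [Real.norm_of_nonneg (mul_nonneg (gf_pos ha _).le (gf_pos hb _).le)]
    exact mul_le_mul_of_nonneg_right (gf_le_c ha _) (gf_pos hb _).le

lemma dgd_eq_set {s : ℝ} (hs : 0 < s) (z : ℝ) :
    ditherGaussDensity s z = ∫ u in Set.Icc (-(1/2) : ℝ) (1/2), gf s (z - u) := by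
  unfold ditherGaussDensity
  simp_rw [gf_eq_gaussianPDFReal hs.le]

instance : IsFiniteMeasure (volume.restrict (Set.Icc (-(1/2) : ℝ) (1/2))) := by
  constructor
  rw [Measure.restrict_apply_univ]
  simp


lemma gf_conv' {s τ : ℝ} (hs : 0 < s) (hτ : 0 < τ) (z : ℝ) :
    ∫ y, gf s (z - y) * gf τ y = gf (s + τ) z := gf_conv hs hτ z

lemma dgd_conv {s t : ℝ} (hs : 0 < s) (hst : s < t) (x : ℝ) :
    ditherGaussDensity t x = ∫ y, ditherGaussDensity s (x - y) * gf (t - s) y := by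
  have ht : 0 < t := hs.trans hst
  have hτ : 0 < t - s := by linarith
  have hconv : ∀ z : ℝ, ∫ y, gf s (z - y) * gf (t - s) y = gf t z := by
    intro z
    have := gf_conv' hs hτ z
    rwa [show s + (t - s) = t by ring] at this
  have hint : Integrable (Function.uncurry fun (u : ℝ) (y : ℝ) => gf s (x - u - y) * gf (t - s) y)
      ((volume.restrict (Set.Icc (-(1/2) : ℝ) (1/2))).prod volume) := by
    rw [integrable_prod_iff]
    · constructor
      · filter_upwards with u
        exact gf_mul_integrable hs hτ (x - u)
      · have heq : (fun u : ℝ => ∫ y, ‖gf s (x - u - y) * gf (t - s) y‖) =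
            fun u : ℝ => gf t (x - u) := by
          funext u
          calc ∫ y, ‖gf s (x - u - y) * gf (t - s) y‖
              = ∫ y, gf s (x - u - y) * gf (t - s) y := by
                congr 1; funext y
                exact Real.norm_of_nonneg (mul_nonneg (gf_pos hs _).le (gf_pos hτ _).le)
            _ = gf t (x - u) := hconv (x - u)
        simp only [Function.uncurry]
        rw [heq]
        exact ((gf_continuous t).comp (by continuity)).integrableOn_Icc
    · exact ((((gf_continuous s).comp
        (by continuity : Continuous fun p : ℝ × ℝ => x - p.1 - p.2)).mul
        ((gf_continuous (t - s)).comp continuous_snd))).aestronglyMeasurable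
  calc ditherGaussDensity t x = ∫ u in Set.Icc (-(1/2) : ℝ) (1/2), gf t (x - u) :=
        dgd_eq_set ht x
    _ = ∫ u in Set.Icc (-(1/2) : ℝ) (1/2), ∫ y, gf s (x - u - y) * gf (t - s) y := by
        congr 1; funext u
        exact (hconv (x - u)).symm
    _ = ∫ y, ∫ u in Set.Icc (-(1/2) : ℝ) (1/2), gf s (x - u - y) * gf (t - s) y :=
        integral_integral_swap hint
    _ = ∫ y, ditherGaussDensity s (x - y) * gf (t - s) y := by
        congr 1; funext y
        rw [integral_mul_const, dgd_eq_set hs]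
        simp only [show ∀ a : ℝ, x - a - y = x - y - a from fun a => by ring]

lemma dD_conv {s t : ℝ} (hs : 0 < s) (hst : s < t) (x : ℝ) :
    dD t x = ∫ y, dD s (x - y) * gf (t - s) y := by
  have hτ : 0 < t - s := by linarith
  have hconv : ∀ z : ℝ, ∫ y, gf s (z - y) * gf (t - s) y = gf t z := by
    intro z
    have := gf_conv' hs hτ z
    rwa [show s + (t - s) = t by ring] at this
  have h1 : (fun y => dD s (x - y) * gf (t - s) y) =
      fun y => gf s ((x + 1/2) - y) * gf (t - s) y - gf s ((x - 1/2) - y) * gf (t - s) y := by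
    funext y
    unfold dD
    rw [show x - y + 1/2 = (x + 1/2) - y by ring, show x - y - 1/2 = (x - 1/2) - y by ring]
    ring
  rw [h1, integral_sub (gf_mul_integrable hs hτ _) (gf_mul_integrable hs hτ _),
    hconv, hconv]
  rfl

lemma dgd_upper {s : ℝ} (hs : 0 < s) (z : ℝ) :
    ditherGaussDensity s z ≤ (Real.sqrt (2 * π * s))⁻¹ := by
  rw [dgd_eq_interval hs]
  have hle : (z - 1/2 : ℝ) ≤ z + 1/2 := by linarith
  calc ∫ w in (z - 1/2)..(z + 1/2), gf s w
      ≤ ∫ _ in (z - 1/2)..(z + 1/2), (Real.sqrt (2 * π * s))⁻¹ := by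
        apply intervalIntegral.integral_mono_on hle ((gf_continuous s).intervalIntegrable _ _)
          (by simp)
        intro w _
        exact gf_le_c hs w
    _ = (Real.sqrt (2 * π * s))⁻¹ := by simp; ring

lemma dD_abs_le {s : ℝ} (hs : 0 < s) (z : ℝ) : |dD s z| ≤ (Real.sqrt (2 * π * s))⁻¹ := by
  unfold dD
  rw [abs_sub_le_iff]
  constructor
  · linarith [gf_le_c hs (z + 1/2), (gf_pos hs (z - 1/2)).le]
  · linarith [gf_le_c hs (z - 1/2), (gf_pos hs (z + 1/2)).le]

section CS

variable {s t : ℝ}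

lemma Iab (hs : 0 < s) (hst : s < t) (x : ℝ) :
    Integrable (fun y => dD s (x - y) * gf (t - s) y) := by
  have hτ : 0 < t - s := by linarith
  apply ((gf_integrable hτ).const_mul ((Real.sqrt (2 * π * s))⁻¹)).mono'
  · exact (((dD_continuous s).comp (by continuity)).mul (gf_continuous _)).aestronglyMeasurable
  · filter_upwards with y
    rw [norm_mul, Real.norm_of_nonneg (gf_pos hτ y).le]
    exact mul_le_mul_of_nonneg_right (dD_abs_le hs _) (gf_pos hτ y).le

lemma Ia2 (hs : 0 < s) (hst : s < t) (x : ℝ) :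
    Integrable (fun y => hFun s (x - y) * gf (t - s) y) := by
  have hτ : 0 < t - s := by linarith
  apply ((gf_integrable hτ).const_mul (hK s)).mono'
  · exact (((hFun_continuous hs).comp (by continuity)).mul (gf_continuous _)).aestronglyMeasurable
  · filter_upwards with y
    rw [Real.norm_of_nonneg (mul_nonneg (hFun_nonneg hs _) (gf_pos hτ y).le)]
    exact mul_le_mul_of_nonneg_right (hFun_bdd hs _) (gf_pos hτ y).le

lemma Ib2 (hs : 0 < s) (hst : s < t) (x : ℝ) :
    Integrable (fun y => ditherGaussDensity s (x - y) * gf (t - s) y) := by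
  have hτ : 0 < t - s := by linarith
  apply ((gf_integrable hτ).const_mul ((Real.sqrt (2 * π * s))⁻¹)).mono'
  · exact (((dgd_continuous hs).comp (by continuity)).mul (gf_continuous _)).aestronglyMeasurable
  · filter_upwards with y
    rw [Real.norm_of_nonneg (mul_nonneg (dgd_pos hs _).le (gf_pos hτ y).le)]
    exact mul_le_mul_of_nonneg_right (dgd_upper hs _) (gf_pos hτ y).le

lemma strictCS (hs : 0 < s) (hst : s < t) (x : ℝ) :
    dD t x ^ 2 < (∫ y, hFun s (x - y) * gf (t - s) y) * ditherGaussDensity t x := by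
  have ht : 0 < t := hs.trans hst
  have hτ : 0 < t - s := by linarith
  have hI : 0 < ditherGaussDensity t x := dgd_pos ht x
  set l : ℝ := dD t x / ditherGaussDensity t x with hl
  set F : ℝ → ℝ := fun y =>
    (dD s (x - y) - l * ditherGaussDensity s (x - y)) ^ 2 * gf (t - s) y /
      ditherGaussDensity s (x - y) with hF
  have hpoint : ∀ y, F y = hFun s (x - y) * gf (t - s) y
      - 2 * l * (dD s (x - y) * gf (t - s) y)
      + l ^ 2 * (ditherGaussDensity s (x - y) * gf (t - s) y) := by
    intro y
    have hP := dgd_pos hs (x - y)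
    simp only [hF, hFun]
    field_simp
    ring
  have hFnonneg : ∀ y, 0 ≤ F y := by
    intro y
    exact div_nonneg (mul_nonneg (sq_nonneg _) (gf_pos hτ y).le) (dgd_pos hs _).le
  have hFint : Integrable F := by
    have : F = fun y => hFun s (x - y) * gf (t - s) y
        - 2 * l * (dD s (x - y) * gf (t - s) y)
        + l ^ 2 * (ditherGaussDensity s (x - y) * gf (t - s) y) := funext hpoint
    rw [this]
    exact ((Ia2 hs hst x).sub ((Iab hs hst x).const_mul _)).add ((Ib2 hs hst x).const_mul _)
  have hFval : ∫ y, F y = (∫ y, hFun s (x - y) * gf (t - s) y)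
      - dD t x ^ 2 / ditherGaussDensity t x := by
    calc ∫ y, F y = ∫ y, (hFun s (x - y) * gf (t - s) y
        - 2 * l * (dD s (x - y) * gf (t - s) y)
        + l ^ 2 * (ditherGaussDensity s (x - y) * gf (t - s) y)) := by
          congr 1; funext y; exact hpoint y
      _ = (∫ y, hFun s (x - y) * gf (t - s) y)
          - 2 * l * (∫ y, dD s (x - y) * gf (t - s) y)
          + l ^ 2 * (∫ y, ditherGaussDensity s (x - y) * gf (t - s) y) := by
          have hA := Ia2 hs hst x
          have hB := (Iab hs hst x).const_mul (2 * l)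
          have hC := (Ib2 hs hst x).const_mul (l ^ 2)
          have hAB : Integrable (fun y => hFun s (x - y) * gf (t - s) y
              - 2 * l * (dD s (x - y) * gf (t - s) y)) volume := hA.sub hB
          rw [integral_add hAB hC, integral_sub hA hB, integral_const_mul,
            integral_const_mul]
      _ = (∫ y, hFun s (x - y) * gf (t - s) y)
          - 2 * l * dD t x + l ^ 2 * ditherGaussDensity t x := by
          rw [← dD_conv hs hst x, ← dgd_conv hs hst x]
      _ = (∫ y, hFun s (x - y) * gf (t - s) y) - dD t x ^ 2 / ditherGaussDensity t x := by
          rw [hl]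
          field_simp
          ring
  have hFposint : 0 < ∫ y, F y := by
    rcases lt_or_eq_of_le (integral_nonneg (f := F) hFnonneg) with h | h
    · exact h
    · exfalso
      have hae : F =ᵐ[volume] 0 := by
        rw [← integral_eq_zero_iff_of_nonneg hFnonneg hFint]
        exact h.symm
      have hFcont : Continuous F := by
        have hc1 : Continuous fun y : ℝ => x - y := by continuity
        apply Continuous.div
        · exact ((((dD_continuous s).comp hc1).sub
            (continuous_const.mul ((dgd_continuous hs).comp hc1))).pow 2).mul
            (gf_continuous _)
        · exact (dgd_continuous hs).comp hc1
        · exact fun y => (dgd_pos hs (x - y)).ne'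
      have hFeq : F = 0 := (Continuous.ae_eq_iff_eq volume hFcont continuous_const).1 hae
      have hzero : ∀ y, dD s (x - y) = l * ditherGaussDensity s (x - y) := by
        intro y
        have := congrFun hFeq y
        simp only [hF, Pi.zero_apply] at this
        have h1 : (dD s (x - y) - l * ditherGaussDensity s (x - y)) ^ 2 = 0 := by
          have hGy := gf_pos hτ y
          have hPy := dgd_pos hs (x - y)
          by_contra hne
          have : 0 < (dD s (x - y) - l * ditherGaussDensity s (x - y)) ^ 2 :=
            lt_of_le_of_ne (sq_nonneg _) (Ne.symm hne)
          have : 0 < (dD s (x - y) - l * ditherGaussDensity s (x - y)) ^ 2 * gf (t - s) y /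
              ditherGaussDensity s (x - y) := by positivity
          linarith
        have := sq_eq_zero_iff.1 h1
        linarith
      have hl0 : l = 0 := by
        have h0 := hzero x
        rw [sub_self] at h0
        have : dD s 0 = 0 := by
          unfold dD gf
          norm_num
        rw [this] at h0
        have := dgd_pos hs (0 : ℝ)
        rcases mul_eq_zero.1 h0.symm with h | h
        · exact h
        · exact absurd h this.ne'
      have h1 := hzero (x - 1)
      rw [hl0, zero_mul, show x - (x - 1) = (1:ℝ) by ring] at h1
      have : dD s 1 < 0 := by
        unfold dD gf
        have hc : (0:ℝ) < (Real.sqrt (2 * π * s))⁻¹ := by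
          have : (0:ℝ) < 2 * π * s := by positivity
          have := Real.sqrt_pos.2 this
          positivity
        have : Real.exp (-(1 + 1/2:ℝ) ^ 2 / (2 * s)) < Real.exp (-(1 - 1/2:ℝ) ^ 2 / (2 * s)) := by
          apply Real.exp_lt_exp.2
          rw [div_lt_div_iff₀ (by positivity) (by positivity)]
          nlinarith
        nlinarith
      linarith
  have h2 : dD t x ^ 2 / ditherGaussDensity t x < ∫ y, hFun s (x - y) * gf (t - s) y := by
    have h := hFposint
    rw [hFval] at h
    linarith
  have h3 := (div_lt_iff₀ hI).1 h2
  linarith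

lemma rFun_prod_integrable (hs : 0 < s) (hst : s < t) :
    Integrable (Function.uncurry fun (x : ℝ) (y : ℝ) => hFun s (x - y) * gf (t - s) y)
      ((volume : Measure ℝ).prod volume) := by
  have hτ : 0 < t - s := by linarith
  rw [integrable_prod_iff']
  · constructor
    · filter_upwards with y
      simpa only [Function.uncurry] using ((hFun_integrable hs).comp_sub_right y).mul_const (gf (t - s) y)
    · have heq : (fun y : ℝ => ∫ x, ‖hFun s (x - y) * gf (t - s) y‖) =
          fun y : ℝ => (∫ x, hFun s x) * gf (t - s) y := by
        funext y
        calc ∫ x, ‖hFun s (x - y) * gf (t - s) y‖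
            = ∫ x, hFun s (x - y) * gf (t - s) y := by
              congr 1; funext z
              exact Real.norm_of_nonneg (mul_nonneg (hFun_nonneg hs _) (gf_pos hτ y).le)
          _ = (∫ x, hFun s (x - y)) * gf (t - s) y := integral_mul_const _ _
          _ = (∫ x, hFun s x) * gf (t - s) y := by
              rw [integral_sub_right_eq_self (hFun s) y]
      simp only [Function.uncurry]
      rw [heq]
      exact (gf_integrable hτ).const_mul _
  · exact (((hFun_continuous hs).comp
      (by continuity : Continuous fun p : ℝ × ℝ => p.1 - p.2)).mul
      ((gf_continuous (t - s)).comp continuous_snd)).aestronglyMeasurable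

lemma rFun_integrable (hs : 0 < s) (hst : s < t) :
    Integrable (fun x => ∫ y, hFun s (x - y) * gf (t - s) y) :=
  (rFun_prod_integrable hs hst).integral_prod_left

lemma rFun_integral (hs : 0 < s) (hst : s < t) :
    ∫ x, ∫ y, hFun s (x - y) * gf (t - s) y = ∫ x, hFun s x := by
  have hτ : 0 < t - s := by linarith
  rw [integral_integral_swap (rFun_prod_integrable hs hst)]
  calc ∫ y, ∫ x, hFun s (x - y) * gf (t - s) y
      = ∫ y, (∫ x, hFun s x) * gf (t - s) y := by
        congr 1; funext y
        rw [integral_mul_const, integral_sub_right_eq_self (hFun s) y]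
    _ = (∫ x, hFun s x) * ∫ y, gf (t - s) y := integral_const_mul _ _
    _ = ∫ x, hFun s x := by rw [gf_integral hτ, mul_one]

end CS

/-- the Fisher information `J(ε + √s·Z)` is strictly decreasing in `s > 0`. -/
theorem stmt_15 : StrictAntiOn ditherGaussFisherInfo (Set.Ioi (0 : ℝ)) := by
  intro s hs t ht hst
  rw [Set.mem_Ioi] at hs ht
  rw [fisher_eq hs, fisher_eq ht]
  have hlt : ∀ x, hFun t x < ∫ y, hFun s (x - y) * gf (t - s) y := by
    intro x
    have h1 := strictCS hs hst x
    have hI := dgd_pos ht x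
    unfold hFun
    rw [div_lt_iff₀ hI]
    rw [show ditherGaussDensity t x = ditherGaussDensity t x from rfl]
    exact h1
  have hint1 : Integrable (hFun t) := hFun_integrable ht
  have hint2 : Integrable (fun x => ∫ y, hFun s (x - y) * gf (t - s) y) :=
    rFun_integrable hs hst
  have hsub : 0 < ∫ x, ((∫ y, hFun s (x - y) * gf (t - s) y) - hFun t x) := by
    rw [integral_pos_iff_support_of_nonneg (fun x => sub_nonneg.2 (hlt x).le) (hint2.sub hint1)]
    have : Function.support (fun x => (∫ y, hFun s (x - y) * gf (t - s) y) - hFun t x)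
        = Set.univ := by
      ext x
      simp only [Function.mem_support, Set.mem_univ, iff_true]
      exact (sub_pos.2 (hlt x)).ne'
    rw [this]
    simp
  rw [integral_sub hint2 hint1] at hsub
  have := rFun_integral hs hst
  linarith
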